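/- arXiv:math/0602125 — 6 statements merged into one kernel-verified Lean document; each statement's English description precedes it below -/
import Mathlib

section
/- Let G be a finite group, N a normal subgroup, and H a Carter subgroup of G. Suppose that any two Carter subgroups of the subgroup M = HN are conjugate in M. Then the image of H in G/N is a Carter subgroup of G/N. -/
open Pointwise

/-- A Carter subgroup: a nilpotent self-normalizing subgroup. -/
def IsCarter {G : Type*} [Group G] (H : Subgroup G) : Prop :=
  Group.IsNilpotent H ∧ Subgroup.normalizer (H : Set G) = H

private lemma conj_smul_mem_iff {G : Type*} [Group G] (g x : G) (H : Subgroup G) :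
    x ∈ MulAut.conj g • H ↔ g⁻¹ * x * g ∈ H := by
  rw [Subgroup.mem_pointwise_smul_iff_inv_smul_mem]
  simp [MulAut.smul_def, mul_assoc]

private lemma normalizer_conj_smul {G : Type*} [Group G] (g : G) (H : Subgroup G) :
    Subgroup.normalizer ((MulAut.conj g • H : Subgroup G) : Set G) = MulAut.conj g • Subgroup.normalizer (H : Set G) := by
  have h1 : MulAut.conj g • H = H.map (MulAut.conj g).toMonoidHom := rfl
  have h2 : MulAut.conj g • Subgroup.normalizer (H : Set G)
      = (Subgroup.normalizer (H : Set G)).map (MulAut.conj g).toMonoidHom := rfl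
  rw [h1, h2, Subgroup.map_normalizer_eq_of_bijective _ (MulAut.conj g).bijective]

private lemma subgroupOf_nilpotent {G : Type*} [Group G] {K M : Subgroup G}
    (h : K ≤ M) (hK : Group.IsNilpotent K) : Group.IsNilpotent (K.subgroupOf M) :=
  nilpotent_of_mulEquiv (Subgroup.subgroupOfEquivOfLe h).symm

theorem image_carter_in_quotient {G : Type*} [Group G] [Finite G]
    (N : Subgroup G) [N.Normal] (H : Subgroup G) (hH : IsCarter H)
    (M : Subgroup G) (hM : M = H ⊔ N)
    (hconj : ∀ K₁ K₂ : Subgroup G, K₁ ≤ M → K₂ ≤ M →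
      IsCarter (K₁.subgroupOf M) → IsCarter (K₂.subgroupOf M) →
      ∃ m ∈ M, MulAut.conj m • K₁ = K₂) :
    IsCarter (H.map (QuotientGroup.mk' N)) := by
  obtain ⟨hnil, hnorm⟩ := hH
  set φ := QuotientGroup.mk' N with hφ
  have hker : φ.ker = N := QuotientGroup.ker_mk' N
  have hcomap : (H.map φ).comap φ = M := by
    rw [Subgroup.comap_map_eq, hker, hM]
  have hHM : H ≤ M := hM ▸ le_sup_left
  constructor
  · exact nilpotent_of_surjective _ (φ.subgroupMap_surjective H)
  · refine le_antisymm ?_ Subgroup.le_normalizer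
    intro x hx
    obtain ⟨g, rfl⟩ := QuotientGroup.mk'_surjective N x
    have hMnorm : ∀ y, y ∈ M ↔ g * y * g⁻¹ ∈ M := by
      intro y
      rw [← hcomap]
      simp only [Subgroup.mem_comap, map_mul, map_inv]
      exact Subgroup.mem_normalizer_iff.mp hx _
    have hHgM : MulAut.conj g • H ≤ M := by
      intro y hy
      rw [conj_smul_mem_iff] at hy
      have h2 := (hMnorm _).mp (hHM hy)
      group at h2
      simpa using h2
    have hc1 : IsCarter (H.subgroupOf M) := by
      refine ⟨subgroupOf_nilpotent hHM hnil, ?_⟩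
      rw [← Subgroup.subgroupOf_normalizer_eq hHM, hnorm]
    have hc2 : IsCarter ((MulAut.conj g • H).subgroupOf M) := by
      refine ⟨subgroupOf_nilpotent hHgM
        (nilpotent_of_mulEquiv (Subgroup.equivSMul (MulAut.conj g) H)), ?_⟩
      rw [← Subgroup.subgroupOf_normalizer_eq, normalizer_conj_smul, hnorm]
      exact hHgM
    obtain ⟨m, hmM, hme⟩ := hconj _ _ hHgM hHM hc2 hc1
    have hmg : m * g ∈ H := by
      rw [smul_smul, ← map_mul] at hme
      rw [← hnorm]
      rw [Subgroup.mem_normalizer_iff]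
      intro h
      constructor
      · intro hh
        have h3 : MulAut.conj (m * g) • h ∈ MulAut.conj (m * g) • H :=
          Subgroup.smul_mem_pointwise_smul _ _ _ hh
        rw [hme] at h3
        simpa [MulAut.smul_def, mul_assoc] using h3
      · intro hh
        rw [← hme, conj_smul_mem_iff] at hh
        group at hh
        simpa using hh
    have hgM : g ∈ M := by
      have : m⁻¹ * (m * g) ∈ M := M.mul_mem (M.inv_mem hmM) (hHM hmg)
      simpa using this
    rw [← hcomap] at hgM
    exact hgM
end

section
/- Let G be a finite group in which any two Carter subgroups are conjugate, and let H be a Carter subgroup of G. Then N_G(M) = M for every subgroup M of G containing H, provided Carter subgroups of M are conjugate in M; in particular, if Carter subgroups of every subgroup of G are conjugate, every subgroup containing a Carter subgroup is self-normalizing. -/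
open Pointwise

theorem overgroup_of_carter_self_normalizing {G : Type*} [Group G] [Finite G]
    (H M : Subgroup G) (hH : IsCarter H) (hHM : H ≤ M)
    (hconj : ∀ K₁ K₂ : Subgroup G, K₁ ≤ M → K₂ ≤ M →
      IsCarter (K₁.subgroupOf M) → IsCarter (K₂.subgroupOf M) →
      ∃ m ∈ M, MulAut.conj m • K₁ = K₂)
    (hcart : ∀ x ∈ Subgroup.normalizer (M : Set G), MulAut.conj x • H ≤ M ∧
      IsCarter ((MulAut.conj x • H).subgroupOf M)) :
    Subgroup.normalizer (M : Set G) = M := by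
  refine le_antisymm (fun x hx => ?_) Subgroup.le_normalizer
  obtain ⟨hle, hc⟩ := hcart x hx
  have h1 := hcart 1 (one_mem _)
  simp only [map_one, one_smul] at h1
  obtain ⟨m, hm, hme⟩ := hconj (MulAut.conj x • H) H hle hHM hc h1.2
  have key : MulAut.conj (m * x) • H = H := by
    rw [map_mul, mul_smul, hme]
  have hmem : m * x ∈ Subgroup.normalizer (H : Set G) := by
    rw [Subgroup.mem_normalizer_iff]
    intro h
    constructor
    · intro hh
      rw [← key]
      exact Subgroup.smul_mem_pointwise_smul h _ _ hh
    · intro hh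
      rw [← key, Subgroup.mem_pointwise_smul_iff_inv_smul_mem] at hh
      simpa [mul_assoc] using hh
  rw [hH.2] at hmem
  have : m * x ∈ M := hHM hmem
  simpa using mul_mem (inv_mem hm) this
end

section
/- Let X be a finite group with non-conjugate Carter subgroups H and K, minimal among such groups in the sense that for every proper subgroup and proper quotient Carter subgroups are conjugate, and let B be a minimal normal subgroup of X. Then X = BH and X = BK. -/
open Pointwise

section Aux

variable {G G' : Type*} [Group G] [Group G']

lemma conj_smul_map (f : G →* G') (x : G) (S : Subgroup G) :
    (MulAut.conj x • S).map f = MulAut.conj (f x) • S.map f := by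
  ext a
  simp only [Subgroup.mem_map, Subgroup.mem_smul_pointwise_iff_exists, MulAut.smul_def,
    MulAut.conj_apply]
  constructor
  · rintro ⟨s, ⟨t, ht, rfl⟩, rfl⟩
    exact ⟨f t, ⟨t, ht, rfl⟩, by simp⟩
  · rintro ⟨s, ⟨t, ht, rfl⟩, rfl⟩
    exact ⟨x * t * x⁻¹, ⟨t, ht, rfl⟩, by simp⟩

lemma conj_smul_eq_iff_mem_normalizer {g : G} {S : Subgroup G} :
    MulAut.conj g • S = S ↔ g ∈ Subgroup.normalizer (S : Set G) := by
  constructor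
  · intro h
    rw [Subgroup.mem_normalizer_iff]
    intro b
    constructor
    · intro hb
      have : MulAut.conj g • b ∈ MulAut.conj g • S := Subgroup.smul_mem_pointwise_smul _ _ _ hb
      rwa [h, MulAut.smul_def, MulAut.conj_apply] at this
    · intro hb
      have : MulAut.conj g • b ∈ MulAut.conj g • S := by
        rwa [h, MulAut.smul_def, MulAut.conj_apply]
      rwa [Subgroup.smul_mem_pointwise_smul_iff] at this
  · intro hg
    ext a
    rw [Subgroup.mem_smul_pointwise_iff_exists]
    constructor
    · rintro ⟨s, hs, rfl⟩
      exact (Subgroup.mem_normalizer_iff.mp hg s).mp hs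
    · intro ha
      refine ⟨g⁻¹ * a * g, ?_, by simp [MulAut.smul_def]; group⟩
      have := (Subgroup.mem_normalizer_iff.mp hg (g⁻¹ * a * g)).mpr
      apply this
      convert ha using 1
      group

lemma mem_normalizer_of_conj_smul_eq {g : G} {S : Subgroup G}
    (h : MulAut.conj g • S = S) : g ∈ Subgroup.normalizer (S : Set G) :=
  conj_smul_eq_iff_mem_normalizer.mp h

/-- A conjugate of a Carter subgroup is Carter. -/
lemma IsCarter.conj_smul {H : Subgroup G} (h : IsCarter H) (x : G) :
    IsCarter (MulAut.conj x • H) := by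
  constructor
  · haveI := h.1
    exact nilpotent_of_mulEquiv (Subgroup.equivSMul (MulAut.conj x) H)
  · have heq : MulAut.conj x • H = H.map (MulAut.conj x).toMonoidHom := rfl
    rw [heq, ← Subgroup.map_equiv_normalizer_eq H (MulAut.conj x), h.2]

/-- A Carter subgroup of `G` contained in `M` is a Carter subgroup of `M`. -/
lemma IsCarter.subgroupOf {H M : Subgroup G} (h : IsCarter H) (hle : H ≤ M) :
    IsCarter (H.subgroupOf M) := by
  constructor
  · haveI := h.1
    exact nilpotent_of_mulEquiv (Subgroup.subgroupOfEquivOfLe hle).symm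
  · refine le_antisymm ?_ Subgroup.le_normalizer
    intro m hm
    rw [Subgroup.mem_normalizer_iff] at hm
    have hmX : (m : G) ∈ Subgroup.normalizer (H : Set G) := by
      rw [Subgroup.mem_normalizer_iff]
      intro b
      constructor
      · intro hb
        have := (hm ⟨b, hle hb⟩).mp (Subgroup.mem_subgroupOf.mpr hb)
        rw [Subgroup.mem_subgroupOf] at this
        exact this
      · intro hb
        have hbM : b ∈ M := by
          have h1 : (m : G)⁻¹ * ((m : G) * b * (m : G)⁻¹) * (m : G) ∈ M :=
            M.mul_mem (M.mul_mem (M.inv_mem m.2) (hle hb)) m.2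
          convert h1 using 1
          group
        have := (hm ⟨b, hbM⟩).mpr (Subgroup.mem_subgroupOf.mpr hb)
        rw [Subgroup.mem_subgroupOf] at this
        exact this
    rw [h.2] at hmX
    exact Subgroup.mem_subgroupOf.mpr hmX

end Aux

section Main

variable {X : Type*} [Group X] [Finite X]

/-- Using conjugacy of Carter subgroups in proper subgroups, two Carter subgroups of `X`
contained in a proper subgroup `M` are conjugate by an element of `M`. -/
lemma carter_conj_in_proper
    (hsub : ∀ M : Subgroup X, M ≠ ⊤ →
      ∀ K₁ K₂ : Subgroup M, IsCarter K₁ → IsCarter K₂ →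
        ∃ m : M, MulAut.conj m • K₁ = K₂)
    {M H₁ H₂ : Subgroup X} (hM : M ≠ ⊤) (h1 : IsCarter H₁) (h2 : IsCarter H₂)
    (l1 : H₁ ≤ M) (l2 : H₂ ≤ M) :
    ∃ m : X, m ∈ M ∧ MulAut.conj m • H₁ = H₂ := by
  obtain ⟨m, hm⟩ := hsub M hM _ _ (h1.subgroupOf l1) (h2.subgroupOf l2)
  refine ⟨m, m.2, ?_⟩
  have := congrArg (Subgroup.map M.subtype) hm
  rw [conj_smul_map, Subgroup.subgroupOf_map_subtype, Subgroup.subgroupOf_map_subtype,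
    inf_eq_left.mpr l1, inf_eq_left.mpr l2] at this
  exact this

lemma carter_map_quotient
    (hsub : ∀ M : Subgroup X, M ≠ ⊤ →
      ∀ K₁ K₂ : Subgroup M, IsCarter K₁ → IsCarter K₂ →
        ∃ m : M, MulAut.conj m • K₁ = K₂)
    {B : Subgroup X} [hBn : B.Normal] {H : Subgroup X} (hH : IsCarter H)
    (hHB : H ⊔ B ≠ ⊤) : IsCarter (H.map (QuotientGroup.mk' B)) := by
  set f := QuotientGroup.mk' B with hf
  have hmapB : B.map f = ⊥ := by
    rw [Subgroup.map_eq_bot_iff, hf, QuotientGroup.ker_mk']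
  constructor
  · haveI := hH.1
    exact nilpotent_of_surjective (f.subgroupMap H) (f.subgroupMap_surjective H)
  · refine le_antisymm ?_ Subgroup.le_normalizer
    intro y hy
    obtain ⟨x, rfl⟩ := QuotientGroup.mk'_surjective B y
    -- x normalizes H ⊔ B
    have hconj : MulAut.conj (f x) • H.map f = H.map f :=
      conj_smul_eq_iff_mem_normalizer.mpr hy
    have hmapeq : (MulAut.conj x • H ⊔ B).map f = (H ⊔ B).map f := by
      rw [Subgroup.map_sup, Subgroup.map_sup, hmapB, conj_smul_map, hconj]
    have hsupeq : MulAut.conj x • H ⊔ B = H ⊔ B := by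
      have := congrArg (Subgroup.comap f) hmapeq
      rwa [Subgroup.comap_map_eq, Subgroup.comap_map_eq, hf, QuotientGroup.ker_mk',
        sup_assoc, sup_idem, sup_assoc, sup_idem] at this
    -- conjugate the two Carter subgroups inside M := H ⊔ B
    have hle1 : MulAut.conj x • H ≤ H ⊔ B := by
      rw [← hsupeq]; exact le_sup_left
    obtain ⟨m, hmM, hmconj⟩ := carter_conj_in_proper hsub hHB (hH.conj_smul x) hH
      hle1 le_sup_left
    have : MulAut.conj (m * x) • H = H := by
      rw [map_mul, mul_smul, hmconj]
    have hmx : m * x ∈ H := by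
      rw [← hH.2]
      exact mem_normalizer_of_conj_smul_eq this
    have hxM : x ∈ H ⊔ B := by
      have : m⁻¹ * (m * x) ∈ H ⊔ B :=
        Subgroup.mul_mem _ (Subgroup.inv_mem _ hmM) (le_sup_left (a := H) (b := B) hmx)
      simpa using this
    -- hence f x ∈ H.map f
    have hmem : f x ∈ (H ⊔ B).map f := Subgroup.mem_map_of_mem f hxM
    rwa [Subgroup.map_sup, hmapB, sup_bot_eq] at hmem

lemma sup_eq_top_aux
    (H K : Subgroup X) (hH : IsCarter H) (hK : IsCarter K)
    (hnc : ¬∃ x : X, MulAut.conj x • H = K)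
    (hsub : ∀ M : Subgroup X, M ≠ ⊤ →
      ∀ K₁ K₂ : Subgroup M, IsCarter K₁ → IsCarter K₂ →
        ∃ m : M, MulAut.conj m • K₁ = K₂)
    (hquot : ∀ (N : Subgroup X) [N.Normal], N ≠ ⊥ →
      ∀ K₁ K₂ : Subgroup (X ⧸ N), IsCarter K₁ → IsCarter K₂ →
        ∃ q : X ⧸ N, MulAut.conj q • K₁ = K₂)
    (B : Subgroup X) (hBn : B.Normal) (hBbot : B ≠ ⊥) :
    B ⊔ H = ⊤ := by
  rw [sup_comm]
  by_contra hHB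
  set f := QuotientGroup.mk' B with hf
  have hmapB : B.map f = ⊥ := by
    rw [Subgroup.map_eq_bot_iff, hf, QuotientGroup.ker_mk']
  have hHbar : IsCarter (H.map f) := carter_map_quotient hsub hH hHB
  have hKbar : IsCarter (K.map f) := by
    by_cases hKB : K ⊔ B = ⊤
    · have htop : K.map f = ⊤ := by
        have : (K ⊔ B).map f = ⊤ := by
          rw [hKB]
          exact Subgroup.map_top_of_surjective f (QuotientGroup.mk'_surjective B)
        rwa [Subgroup.map_sup, hmapB, sup_bot_eq] at this
      rw [htop]
      constructor
      · haveI := hK.1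
        haveI : Group.IsNilpotent (X ⧸ B) := by
          refine nilpotent_of_surjective (f.comp K.subtype) ?_
          rw [← MonoidHom.range_eq_top, MonoidHom.range_comp, Subgroup.range_subtype, htop]
        exact nilpotent_of_mulEquiv Subgroup.topEquiv.symm
      · exact le_antisymm le_top Subgroup.le_normalizer
    · exact carter_map_quotient hsub hK hKB
  obtain ⟨q, hq⟩ := hquot B hBbot _ _ hHbar hKbar
  obtain ⟨x, rfl⟩ := QuotientGroup.mk'_surjective B q
  have hmapeq : (MulAut.conj x • H).map f = K.map f := by
    rw [conj_smul_map]; exact hq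
  have hsupeq : MulAut.conj x • H ⊔ B = K ⊔ B := by
    have := congrArg (Subgroup.comap f) hmapeq
    rwa [Subgroup.comap_map_eq, Subgroup.comap_map_eq, hf, QuotientGroup.ker_mk'] at this
  by_cases hKB : K ⊔ B = ⊤
  · -- then H ⊔ B = ⊤, contradiction
    apply hHB
    have := congrArg (fun S => (MulAut.conj x)⁻¹ • S) (hsupeq.trans hKB)
    rw [Subgroup.smul_sup, inv_smul_smul, ← map_inv, Subgroup.Normal.conj_smul_eq_self,
      Subgroup.Normal.conj_smul_eq_self] at this
    exact this
  · -- conjugate inside K ⊔ B, contradicting non-conjugacy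
    exfalso
    apply hnc
    have hle1 : MulAut.conj x • H ≤ K ⊔ B := by
      rw [← hsupeq]; exact le_sup_left
    obtain ⟨m, _, hmconj⟩ := carter_conj_in_proper hsub hKB (hH.conj_smul x) hK
      hle1 le_sup_left
    exact ⟨m * x, by rw [map_mul, mul_smul, hmconj]⟩

end Main

theorem sup_minimal_normal_eq_top {X : Type*} [Group X] [Finite X]
    (H K : Subgroup X) (hH : IsCarter H) (hK : IsCarter K)
    (hnc : ¬∃ x : X, MulAut.conj x • H = K)
    (hsub : ∀ M : Subgroup X, M ≠ ⊤ →
      ∀ K₁ K₂ : Subgroup M, IsCarter K₁ → IsCarter K₂ →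
        ∃ m : M, MulAut.conj m • K₁ = K₂)
    (hquot : ∀ (N : Subgroup X) [N.Normal], N ≠ ⊥ →
      ∀ K₁ K₂ : Subgroup (X ⧸ N), IsCarter K₁ → IsCarter K₂ →
        ∃ q : X ⧸ N, MulAut.conj q • K₁ = K₂)
    (B : Subgroup X) (hBn : B.Normal) (hBbot : B ≠ ⊥)
    (hBmin : ∀ C : Subgroup X, C.Normal → C ≤ B → C ≠ ⊥ → C = B) :
    B ⊔ H = ⊤ ∧ B ⊔ K = ⊤ := by
  have hnc' : ¬∃ x : X, MulAut.conj x • K = H := by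
    rintro ⟨x, hx⟩
    exact hnc ⟨x⁻¹, by rw [map_inv, ← hx, inv_smul_smul]⟩
  exact ⟨sup_eq_top_aux H K hH hK hnc hsub hquot B hBn hBbot,
    sup_eq_top_aux K H hK hH hnc' hsub hquot B hBn hBbot⟩
end

section
/- Let X be a finite group with a minimal normal subgroup B such that X/B is nilpotent (e.g., X = BH for a Carter subgroup H). If X has non-conjugate Carter subgroups and every soluble quotient situation gives conjugacy, then B is the unique minimal normal subgroup of X. -/
open Pointwise

theorem unique_minimal_normal {X : Type*} [Group X] [Finite X]
    (B : Subgroup X) (hBn : B.Normal) (hBbot : B ≠ ⊥)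
    (hBmin : ∀ C : Subgroup X, C.Normal → C ≤ B → C ≠ ⊥ → C = B)
    (H : Subgroup X) (hH : IsCarter H) (hBH : B ⊔ H = ⊤)
    (hns : ∀ M : Subgroup X, M.Normal → M ≠ ⊥ →
      (∀ C : Subgroup X, C.Normal → C ≤ M → C ≠ ⊥ → C = M) → ¬IsSolvable M) :
    ∀ M : Subgroup X, M.Normal → M ≠ ⊥ →
      (∀ C : Subgroup X, C.Normal → C ≤ M → C ≠ ⊥ → C = M) → M = B := by
  intro M hMn hMbot hMmin
  -- M ∩ B is normal and ≤ M, so it is ⊥ or M.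
  have hinter : M ⊓ B = ⊥ ∨ M ⊓ B = M := by
    by_cases h : M ⊓ B = ⊥
    · exact Or.inl h
    · exact Or.inr (hMmin (M ⊓ B) (by haveI := hMn; haveI := hBn; infer_instance) inf_le_left h)
  rcases hinter with h | h
  · -- M embeds into the nilpotent group X/B, so M is solvable: contradiction.
    exfalso
    -- X/B is nilpotent: it is the surjective image of the nilpotent H.
    have hQnil : Group.IsNilpotent (X ⧸ B) := by
      have hnil : Group.IsNilpotent H := hH.1
      refine nilpotent_of_surjective ((QuotientGroup.mk' B).comp H.subtype) ?_
      intro q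
      obtain ⟨x, rfl⟩ := QuotientGroup.mk_surjective q
      have hx : x ∈ B ⊔ H := hBH ▸ Subgroup.mem_top x
      rw [← SetLike.mem_coe, Subgroup.normal_mul] at hx
      obtain ⟨b, hb, hh, hhH, rfl⟩ := hx
      refine ⟨⟨hh, hhH⟩, ?_⟩
      simp only [MonoidHom.comp_apply, QuotientGroup.mk'_apply, Subgroup.coe_subtype]
      rw [QuotientGroup.eq_iff_div_mem]
      simpa [div_eq_mul_inv, mul_assoc] using hb
    -- M embeds in X/B since M ⊓ B = ⊥.
    have hinj : Function.Injective ((QuotientGroup.mk' B).comp M.subtype) := by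
      intro a b hab
      simp only [MonoidHom.comp_apply, QuotientGroup.mk'_apply, Subgroup.coe_subtype] at hab
      rw [QuotientGroup.eq_iff_div_mem] at hab
      have : ((a : X) / b) ∈ M ⊓ B := ⟨M.div_mem a.2 b.2, hab⟩
      rw [h, Subgroup.mem_bot, div_eq_one] at this
      exact Subtype.ext this
    haveI : Group.IsSolvable (X ⧸ B) := by
      haveI := hQnil; infer_instance
    exact hns M hMn hMbot hMmin (solvable_of_solvable_injective hinj)
  · -- M ≤ B, so M = B by minimality of B.
    have hMB : M ≤ B := h ▸ inf_le_right
    exact hBmin M hMn hMB hMbot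
end

section
/- Let G be a finite group, K a Carter subgroup of G, and z a nontrivial element of the center of K. Suppose that any two Carter subgroups of C_G(z) are conjugate in C_G(z). If x ∈ G and z^(x⁻¹) ∈ Z(K), then z^x = z. -/
open Pointwise

lemma isCarter_subgroupOf {G : Type*} [Group G] {K C : Subgroup G}
    (hK : IsCarter K) (hKC : K ≤ C) : IsCarter (K.subgroupOf C) := by
  constructor
  · haveI : Group.IsNilpotent K := hK.1
    exact nilpotent_of_mulEquiv (Subgroup.subgroupOfEquivOfLe hKC).symm
  · refine le_antisymm ?_ Subgroup.le_normalizer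
    intro c hc
    rw [Subgroup.mem_normalizer_iff] at hc
    have hcK : (c : G) ∈ Subgroup.normalizer (K : Set G) := by
      rw [Subgroup.mem_normalizer_iff]
      intro g
      constructor
      · intro hg
        have := (hc ⟨g, hKC hg⟩).mp (by simpa [Subgroup.mem_subgroupOf] using hg)
        simpa [Subgroup.mem_subgroupOf] using this
      · intro hg
        have hgC : g ∈ C := by
          have h1 : (c : G) * g * (c : G)⁻¹ ∈ C := hKC hg
          have : (c : G)⁻¹ * ((c : G) * g * (c : G)⁻¹) * (c : G) ∈ C :=
            C.mul_mem (C.mul_mem (C.inv_mem c.2) h1) c.2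
          simpa [mul_assoc] using this
        have := (hc ⟨g, hgC⟩).mpr (by simpa [Subgroup.mem_subgroupOf] using hg)
        simpa [Subgroup.mem_subgroupOf] using this
    rw [hK.2] at hcK
    simpa [Subgroup.mem_subgroupOf] using hcK

theorem conj_central_elt_eq {G : Type*} [Group G] [Finite G]
    (K : Subgroup G) (hK : IsCarter K) (z : G) (hz : z ≠ 1)
    (hzK : z ∈ K) (hzc : ∀ k ∈ K, k * z = z * k)
    (hconj : ∀ K₁ K₂ : Subgroup (Subgroup.centralizer {z} : Subgroup G),
      IsCarter K₁ → IsCarter K₂ →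
        ∃ c : (Subgroup.centralizer {z} : Subgroup G), MulAut.conj c • K₁ = K₂)
    (x : G) (hx : x * z * x⁻¹ ∈ K ∧ ∀ k ∈ K, k * (x * z * x⁻¹) = (x * z * x⁻¹) * k) :
    x⁻¹ * z * x = z := by
  set C : Subgroup G := Subgroup.centralizer {z} with hC
  -- K ≤ C
  have hKC : K ≤ C := by
    intro k hk
    rw [hC, Subgroup.mem_centralizer_iff]
    rintro h rfl
    exact (hzc k hk).symm
  -- the conjugate subgroup
  set K' : Subgroup G := MulAut.conj x⁻¹ • K with hK'def
  have memK' : ∀ g : G, g ∈ K' ↔ x * g * x⁻¹ ∈ K := by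
    intro g
    rw [hK'def, Subgroup.mem_pointwise_smul_iff_inv_smul_mem]
    simp [MulAut.smul_def, MulAut.conj_apply, mul_assoc]
  have hK'C : K' ≤ C := by
    intro g hg
    rw [memK'] at hg
    rw [hC, Subgroup.mem_centralizer_iff]
    rintro h rfl
    have h1 := hx.2 (x * g * x⁻¹) hg
    have h2 := congrArg (fun t => x⁻¹ * t * x) h1
    simpa [mul_assoc] using h2.symm
  -- K' is a Carter subgroup of G
  have hK' : IsCarter K' := by
    constructor
    · haveI : Group.IsNilpotent K := hK.1
      exact nilpotent_of_mulEquiv (Subgroup.equivSMul (MulAut.conj x⁻¹) K)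
    · refine le_antisymm ?_ Subgroup.le_normalizer
      intro g hg
      rw [Subgroup.mem_normalizer_iff] at hg
      have hgN : x * g * x⁻¹ ∈ Subgroup.normalizer (K : Set G) := by
        rw [Subgroup.mem_normalizer_iff]
        intro h
        have h1 : h ∈ K ↔ x⁻¹ * h * x ∈ K' := by
          rw [memK' (x⁻¹ * h * x)]
          constructor
          · intro hh; simpa [mul_assoc] using hh
          · intro hh; simpa [mul_assoc] using hh
        rw [h1, hg (x⁻¹ * h * x), memK']
        constructor
        · intro hh
          have : x * (g * (x⁻¹ * h * x) * g⁻¹) * x⁻¹ =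
              (x * g * x⁻¹) * h * (x * g * x⁻¹)⁻¹ := by group
          rwa [this] at hh
        · intro hh
          have : x * (g * (x⁻¹ * h * x) * g⁻¹) * x⁻¹ =
              (x * g * x⁻¹) * h * (x * g * x⁻¹)⁻¹ := by group
          rw [this]
          exact hh
      rw [hK.2] at hgN
      rw [memK']
      exact hgN
  -- apply conjugacy hypothesis inside C
  obtain ⟨c, hc⟩ := hconj (K.subgroupOf C) (K'.subgroupOf C)
    (isCarter_subgroupOf hK hKC) (isCarter_subgroupOf hK' hK'C)
  -- x * c normalizes K
  have hxc : x * (c : G) ∈ Subgroup.normalizer (K : Set G) := by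
    rw [Subgroup.mem_normalizer_iff]
    intro g
    constructor
    · intro hg
      have hmem : (⟨g, hKC hg⟩ : C) ∈ K.subgroupOf C := by
        simpa [Subgroup.mem_subgroupOf] using hg
      have : MulAut.conj c • (⟨g, hKC hg⟩ : C) ∈ MulAut.conj c • K.subgroupOf C :=
        Subgroup.smul_mem_pointwise_smul _ _ _ hmem
      rw [hc] at this
      have h2 : (c : G) * g * (c : G)⁻¹ ∈ K' := by
        simpa [Subgroup.mem_subgroupOf, MulAut.smul_def, MulAut.conj_apply] using this
      rw [memK'] at h2
      have : x * ((c : G) * g * (c : G)⁻¹) * x⁻¹ =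
          (x * (c : G)) * g * (x * (c : G))⁻¹ := by group
      rwa [this] at h2
    · intro hg
      have h2 : (c : G) * g * (c : G)⁻¹ ∈ K' := by
        rw [memK']
        have : x * ((c : G) * g * (c : G)⁻¹) * x⁻¹ =
            (x * (c : G)) * g * (x * (c : G))⁻¹ := by group
        rw [this]
        exact hg
      have hgC : g ∈ C := by
        have h3 : (c : G) * g * (c : G)⁻¹ ∈ C := hK'C h2
        have : (c : G)⁻¹ * ((c : G) * g * (c : G)⁻¹) * (c : G) ∈ C :=
          C.mul_mem (C.mul_mem (C.inv_mem c.2) h3) c.2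
        simpa [mul_assoc] using this
      have hmem : (⟨(c : G) * g * (c : G)⁻¹, hK'C h2⟩ : C) ∈ K'.subgroupOf C := by
        simpa [Subgroup.mem_subgroupOf] using h2
      rw [← hc] at hmem
      have heq : (⟨(c : G) * g * (c : G)⁻¹, hK'C h2⟩ : C) =
          MulAut.conj c • (⟨g, hgC⟩ : C) := by
        ext
        simp [MulAut.smul_def, MulAut.conj_apply]
      rw [heq, Subgroup.smul_mem_pointwise_smul_iff] at hmem
      simpa [Subgroup.mem_subgroupOf] using hmem
  rw [hK.2] at hxc
  have h1 := hzc (x * (c : G)) hxc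
  have h2 : z * (c : G) = (c : G) * z :=
    Subgroup.mem_centralizer_iff.mp c.2 z rfl
  -- from (x*c)*z = z*(x*c) and c*z = z*c deduce x*z = z*x
  have h3 : x * z * (c : G) = z * x * (c : G) := by
    calc x * z * (c : G) = x * (z * (c : G)) := by rw [mul_assoc]
    _ = x * ((c : G) * z) := by rw [h2]
    _ = x * (c : G) * z := by rw [mul_assoc]
    _ = z * (x * (c : G)) := h1
    _ = z * x * (c : G) := by rw [mul_assoc]
  have h4 : x * z = z * x := mul_right_cancel h3
  rw [mul_assoc, ← h4, ← mul_assoc, inv_mul_cancel, one_mul]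
end

section
/- Let G be a finite group, K a Carter subgroup, z ∈ Z(K) nontrivial, with Carter subgroups of C_G(z) conjugate in C_G(z). Then z is not conjugate in G to any power z^k with z^k ≠ z. -/
open Pointwise

/-- If `H ≤ C` and `H` is self-normalizing in `G`, then `H.subgroupOf C` is
self-normalizing in `C`. -/
lemma subgroupOf_normalizer_eq_self {G : Type*} [Group G] {H C : Subgroup G}
    (hHC : H ≤ C) (hH : Subgroup.normalizer (H : Set G) = H) :
    Subgroup.normalizer ((H.subgroupOf C : Subgroup C) : Set C) = H.subgroupOf C := by
  refine le_antisymm ?_ Subgroup.le_normalizer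
  intro n hn
  rw [Subgroup.mem_normalizer_iff] at hn
  rw [Subgroup.mem_subgroupOf, ← hH, Subgroup.mem_normalizer_iff]
  intro g
  constructor
  · intro hg
    have := (hn ⟨g, hHC hg⟩).mp (by simpa [Subgroup.mem_subgroupOf] using hg)
    simpa [Subgroup.mem_subgroupOf] using this
  · intro hg
    have hgC : g ∈ C := by
      have h1 : ((n : G) * g * (n : G)⁻¹) ∈ C := hHC hg
      have : (n : G)⁻¹ * ((n : G) * g * (n : G)⁻¹) * (n : G) ∈ C :=
        C.mul_mem (C.mul_mem (C.inv_mem n.2) h1) n.2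
      simpa [mul_assoc] using this
    have := (hn ⟨g, hgC⟩).mpr (by simpa [Subgroup.mem_subgroupOf] using hg)
    simpa [Subgroup.mem_subgroupOf] using this

theorem not_conjugate_to_distinct_power {G : Type*} [Group G] [Finite G]
    (K : Subgroup G) (hK : IsCarter K) (z : G) (hz : z ≠ 1)
    (hzK : z ∈ K) (hzc : ∀ k ∈ K, k * z = z * k)
    (hconj : ∀ K₁ K₂ : Subgroup (Subgroup.centralizer {z} : Subgroup G),
      IsCarter K₁ → IsCarter K₂ →
        ∃ c : (Subgroup.centralizer {z} : Subgroup G), MulAut.conj c • K₁ = K₂) :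
    ∀ (k : ℕ) (x : G), x⁻¹ * z * x = z ^ k → z ^ k = z := by
  intro k x hx
  set C : Subgroup G := Subgroup.centralizer {z} with hCdef
  have hKC : K ≤ C := by
    intro g hg
    rw [Subgroup.mem_centralizer_singleton_iff]
    exact hzc g hg
  -- `z ^ k` is conjugate to `z`, hence has the same order, hence generates the
  -- same cyclic group; thus `z` is a power of `z ^ k`.
  have horder : orderOf (z ^ k) = orderOf z := by
    rw [← hx]
    have : x⁻¹ * z * x = (MulAut.conj x⁻¹) z := by
      simp [MulAut.conj_apply]
    rw [this, MulEquiv.orderOf_eq]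
  have hle : Subgroup.zpowers (z ^ k) ≤ Subgroup.zpowers z :=
    Subgroup.zpowers_le.mpr ⟨(k : ℤ), by simp⟩
  have hzpeq : Subgroup.zpowers (z ^ k) = Subgroup.zpowers z :=
    Subgroup.eq_of_le_of_card_ge hle (by rw [Nat.card_zpowers, Nat.card_zpowers, horder])
  obtain ⟨m, hm⟩ : ∃ m : ℤ, (z ^ k) ^ m = z := by
    have : z ∈ Subgroup.zpowers (z ^ k) := hzpeq ▸ Subgroup.mem_zpowers z
    exact Subgroup.mem_zpowers_iff.mp this
  have hxzk : x * z ^ k * x⁻¹ = z := by rw [← hx]; group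
  -- conjugation by `x` preserves `C`
  have hCiff : ∀ g : G, g ∈ C ↔ x * g * x⁻¹ ∈ C := by
    intro g
    rw [hCdef, Subgroup.mem_centralizer_singleton_iff,
      Subgroup.mem_centralizer_singleton_iff]
    constructor
    · intro h
      have hcom : Commute g (z ^ k) := (Commute.pow_right h k)
      have := hcom.map (MulAut.conj x).toMonoidHom
      simpa [MulAut.conj_apply, hxzk, Commute, SemiconjBy] using this
    · intro h
      have hcom : Commute (x * g * x⁻¹) z := h
      have h2 := hcom.map (MulAut.conj x⁻¹).toMonoidHom
      have h3 : Commute g (x⁻¹ * z * x) := by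
        simpa [MulAut.conj_apply, mul_assoc] using h2
      rw [hx] at h3
      have := h3.zpow_right m
      rw [hm] at this
      exact this
  -- the conjugate `x⁻¹ K x`
  set f : G →* G := (MulAut.conj x⁻¹).toMonoidHom with hfdef
  set K' : Subgroup G := K.map f with hK'def
  have hmemK' : ∀ g : G, g ∈ K' ↔ x * g * x⁻¹ ∈ K := by
    intro g
    constructor
    · rintro ⟨h, hh, rfl⟩
      have e : x * (f h) * x⁻¹ = h := by
        simp only [hfdef, MulEquiv.coe_toMonoidHom, MulAut.conj_apply]; group
      rw [e]; exact hh
    · intro hg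
      exact ⟨x * g * x⁻¹, hg, by simp [hfdef, MulAut.conj_apply]; group⟩
  have hK'C : K' ≤ C := by
    intro g hg
    rw [hCiff]
    exact hKC ((hmemK' g).mp hg)
  have hK'norm : Subgroup.normalizer (K' : Set G) = K' := by
    rw [hK'def, hfdef, ← Subgroup.map_equiv_normalizer_eq K (MulAut.conj x⁻¹), hK.2]
  have hK'nil : Group.IsNilpotent K' := by
    have : Group.IsNilpotent K := hK.1
    exact nilpotent_of_mulEquiv (K.equivMapOfInjective f (MulAut.conj x⁻¹).injective)
  -- the two Carter subgroups of C
  have hC1 : IsCarter (K'.subgroupOf C) := by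
    constructor
    · exact @nilpotent_of_mulEquiv _ _ _ _ hK'nil (Subgroup.subgroupOfEquivOfLe hK'C).symm
    · exact subgroupOf_normalizer_eq_self hK'C hK'norm
  have hC2 : IsCarter (K.subgroupOf C) := by
    constructor
    · exact @nilpotent_of_mulEquiv _ _ _ _ hK.1 (Subgroup.subgroupOfEquivOfLe hKC).symm
    · exact subgroupOf_normalizer_eq_self hKC hK.2
  obtain ⟨c, hc⟩ := hconj (K'.subgroupOf C) (K.subgroupOf C) hC1 hC2
  -- translate the conjugacy
  have hkey : ∀ a : C, a ∈ K.subgroupOf C ↔ ((c : G)⁻¹ * (a : G) * (c : G)) ∈ K' := by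
    intro a
    rw [← hc, Subgroup.mem_pointwise_smul_iff_inv_smul_mem]
    have : ((MulAut.conj c)⁻¹ • a) = c⁻¹ * a * c := by
      simp [MulAut.smul_def, MulAut.conj_apply]
    rw [this, Subgroup.mem_subgroupOf]
    norm_cast
  -- w := x * c⁻¹ normalizes K
  set w : G := x * (c : G)⁻¹ with hwdef
  have hw : w ∈ K := by
    rw [← hK.2, Subgroup.mem_normalizer_iff]
    intro g
    have hconjw : ∀ u : G, w * u * w⁻¹ = x * ((c : G)⁻¹ * u * (c : G)) * x⁻¹ := by
      intro u; rw [hwdef]; group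
    constructor
    · intro hg
      have ha : g ∈ C := hKC hg
      have := (hkey ⟨g, ha⟩).mp (by simpa [Subgroup.mem_subgroupOf] using hg)
      have := (hmemK' _).mp this
      rw [hconjw]
      exact this
    · intro hg
      have hgwC : w * g * w⁻¹ ∈ C := hKC hg
      have hgC : g ∈ C := by
        have h1 : x⁻¹ * (w * g * w⁻¹) * x ∈ C := by
          rw [hCiff]
          have : x * (x⁻¹ * (w * g * w⁻¹) * x) * x⁻¹ = w * g * w⁻¹ := by group
          rw [this]; exact hgwC
        have h2 : (c : G) * (x⁻¹ * (w * g * w⁻¹) * x) * (c : G)⁻¹ ∈ C :=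
          C.mul_mem (C.mul_mem c.2 h1) (C.inv_mem c.2)
        have : (c : G) * (x⁻¹ * (w * g * w⁻¹) * x) * (c : G)⁻¹ = g := by
          rw [hwdef]; group
        rwa [this] at h2
      have : ((c : G)⁻¹ * g * (c : G)) ∈ K' := by
        rw [hmemK']
        have : x * ((c : G)⁻¹ * g * (c : G)) * x⁻¹ = w * g * w⁻¹ := by
          rw [hwdef]; group
        rw [this]; exact hg
      have := (hkey ⟨g, hgC⟩).mpr this
      simpa [Subgroup.mem_subgroupOf] using this
  -- conclude
  have hcz : (c : G) * z = z * (c : G) :=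
    Subgroup.mem_centralizer_singleton_iff.mp c.2
  have hwz : w * z = z * w := hzc w hw
  have hxw : x = w * (c : G) := by rw [hwdef]; group
  rw [← hx, hxw]
  calc (w * (c : G))⁻¹ * z * (w * (c : G))
      = (c : G)⁻¹ * (w⁻¹ * z * w) * (c : G) := by group
    _ = (c : G)⁻¹ * z * (c : G) := by
        rw [show w⁻¹ * z * w = z by rw [mul_assoc, ← hwz]; group]
    _ = z := by rw [mul_assoc, ← hcz]; group
end
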